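/- arXiv:1311.5718 — 3 statements merged into one kernel-verified Lean document; each statement's English description precedes it below -/
import Mathlib

section
/- Let R be a dominant region of the k-Catalan arrangement of Φ, B its pseudomaximal alcove (the maximal alcove of the bounded region θ⁻¹(𝓘̲) of the (k+1)-Catalan arrangement, where 𝓘 = θ(R)), and t ≤ k a positive integer. If ⟨x₀, α⟩ > t for some x₀ ∈ R, then ⟨x, α⟩ > t for all x ∈ B. -/
open scoped Pointwise RealInnerProductSpace

/-- A crystallographic root system together with a choice of simple system. -/
structure RootSystemData (V : Type*) [NormedAddCommGroup V] [InnerProductSpace ℝ V] where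
  Φ : Set V
  S : Set V
  finite : Φ.Finite
  ne_zero : ∀ α ∈ Φ, α ≠ 0
  reflect_mem : ∀ α ∈ Φ, ∀ β ∈ Φ, β - (2 * (inner ℝ β α : ℝ) / (inner ℝ α α : ℝ)) • α ∈ Φ
  crystal : ∀ α ∈ Φ, ∀ β ∈ Φ, ∃ m : ℤ, 2 * (inner ℝ β α : ℝ) / (inner ℝ α α : ℝ) = (m : ℝ)
  reduced : ∀ α ∈ Φ, ∀ t : ℝ, t • α ∈ Φ → t = 1 ∨ t = -1
  S_sub : S ⊆ Φ
  S_indep : LinearIndependent ℝ ((↑) : S → V)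
  decomp : ∀ α ∈ Φ, α ∈ AddSubmonoid.closure S ∨ -α ∈ AddSubmonoid.closure S

namespace RootSystemData

variable {V : Type*} [NormedAddCommGroup V] [InnerProductSpace ℝ V] (D : RootSystemData V)

/-- The positive roots. -/
def pos : Set V := {α ∈ D.Φ | α ∈ AddSubmonoid.closure D.S}

/-- The root poset order: `α ≤ β` iff `β - α` is a nonnegative integer combination
of simple roots. -/
def rle (α β : V) : Prop := β - α ∈ AddSubmonoid.closure D.S

/-- An (order) ideal of the root poset. -/
def IsIdeal (I : Set V) : Prop :=
  I ⊆ D.pos ∧ ∀ α ∈ I, ∀ β ∈ D.pos, D.rle β α → β ∈ I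

/-- The order filters complementary to a chain of ideals, with the conventions
`J 0 = Φ⁺` (as `I 0 = ∅`) and `J i = J k` for `i > k`. -/
def Jf (k : ℕ) (I : ℕ → Set V) (i : ℕ) : Set V := D.pos \ I (min i k)

/-- A geometric chain of `k` ideals in the root poset. -/
structure IsGeomChain (k : ℕ) (I : ℕ → Set V) : Prop where
  zero : I 0 = ∅
  ideal : ∀ i, 1 ≤ i → i ≤ k → D.IsIdeal (I i)
  mono : ∀ i j, i ≤ j → j ≤ k → I i ⊆ I j
  geomI : ∀ i j, i + j ≤ k → (I i + I j) ∩ D.pos ⊆ I (i + j)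
  geomJ : ∀ i j, (D.Jf k I i + D.Jf k I j) ∩ D.pos ⊆ D.Jf k I (i + j)

/-- A chain of ideals is positive if `S ⊆ I k`. -/
def IsPositiveChain (k : ℕ) (I : ℕ → Set V) : Prop := D.S ⊆ I k

/-- The set of values `r₁ + … + r_m` over all expressions `α = α₁ + … + α_m` with
`α_i ∈ I (r i)` and `1 ≤ r i ≤ k`; its least element (when it exists) is `r_α(𝓘)`. -/
def rVals (_D : RootSystemData V) (k : ℕ) (I : ℕ → Set V) (α : V) : Set ℕ :=
  {N | ∃ m : ℕ, ∃ a : Fin m → V, ∃ r : Fin m → ℕ,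
    (∀ i, 1 ≤ r i ∧ r i ≤ k ∧ a i ∈ I (r i)) ∧ (∑ i, a i) = α ∧ (∑ i, r i) = N}

/-- The extension `𝓘̲` of a geometric chain of `k` ideals to a chain of `k+1` ideals,
with `I̲_{k+1} = ⋃_{i+j=k+1} ((I_i + I_j) ∩ Φ⁺) ∪ I_k ∪ S`. -/
def Ibar (k : ℕ) (I : ℕ → Set V) : ℕ → Set V := fun i =>
  if i ≤ k then I i
  else (⋃ (p : ℕ × ℕ) (_ : p.1 + p.2 = k + 1), (I p.1 + I p.2) ∩ D.pos) ∪ I k ∪ D.S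

/-- `α` is a rank `r` indecomposable element of the chain of ideals `I`. -/
def IsIndec (k : ℕ) (I : ℕ → Set V) (r : ℕ) (α : V) : Prop :=
  α ∈ I r ∧ IsLeast (D.rVals k I α) r ∧
  (∀ i j, i + j = r → α ∉ I i + I j) ∧
  (∀ β ∈ D.pos, ∀ t, t ≤ k → IsLeast (D.rVals k I (α + β)) t → β ∈ I (t - r))

/-- The complement of the `k`-Catalan arrangement of `Φ`. -/
def catComp (k : ℕ) : Set V :=
  {x | ∀ α ∈ D.Φ, ∀ r : ℕ, r ≤ k → (inner ℝ x α : ℝ) ≠ (r : ℝ)}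

/-- A region of the `k`-Catalan arrangement: a connected component of the complement. -/
def IsRegion (k : ℕ) (R : Set V) : Prop :=
  ∃ x ∈ D.catComp k, R = connectedComponentIn (D.catComp k) x

/-- A dominant region of the `k`-Catalan arrangement. -/
def IsDomRegion (k : ℕ) (R : Set V) : Prop :=
  D.IsRegion k R ∧ ∀ x ∈ R, ∀ α ∈ D.pos, 0 < (inner ℝ x α : ℝ)

/-- The complement of the affine Coxeter arrangement of `Φ`. -/
def affComp : Set V := {x | ∀ α ∈ D.Φ, ∀ r : ℤ, (inner ℝ x α : ℝ) ≠ (r : ℝ)}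

/-- An alcove: a connected component of the complement of the affine Coxeter arrangement. -/
def IsAlcove (A : Set V) : Prop :=
  ∃ x ∈ D.affComp, A = connectedComponentIn D.affComp x

/-- The hyperplane `H_α^r` supports a facet of `R`. -/
def IsWall (_D : RootSystemData V) (R : Set V) (α : V) (r : ℝ) : Prop :=
  ∃ x, (inner ℝ x α : ℝ) = r ∧ ∃ ε > 0, ∀ y, (inner ℝ y α : ℝ) = r → dist y x < ε → y ∈ closure R

/-- `H_α^r` is a ceiling of the dominant region (or alcove) `R`: a wall not through
the origin with `R` on the same side as the origin. -/
def IsCeiling (R : Set V) (α : V) (r : ℝ) : Prop :=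
  D.IsWall R α r ∧ 0 < r ∧ ∀ x ∈ R, (inner ℝ x α : ℝ) < r

/-- `H_α^r` is a floor of the dominant region (or alcove) `R`: a wall not through
the origin separating `R` from the origin. -/
def IsFloor (R : Set V) (α : V) (r : ℝ) : Prop :=
  D.IsWall R α r ∧ 0 < r ∧ ∀ x ∈ R, r < (inner ℝ x α : ℝ)

/-- The chain of ideals `θ(R)` associated to a dominant region `R`. -/
def theta (R : Set V) : ℕ → Set V := fun i =>
  {α ∈ D.pos | ∀ x ∈ R, (inner ℝ x α : ℝ) < (i : ℝ)}

/-- `B` is the maximal alcove of the (bounded) region corresponding to the positive chain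
of ideals `I`, i.e. the alcove with `r(B,α) = r_α(𝓘)` for all positive roots `α`. -/
def IsMaxAlcoveOf (k : ℕ) (I : ℕ → Set V) (B : Set V) : Prop :=
  D.IsAlcove B ∧ ∀ α ∈ D.pos, ∃ r : ℕ, IsLeast (D.rVals k I α) r ∧
    ∀ x ∈ B, ((r : ℝ) - 1 < (inner ℝ x α : ℝ) ∧ (inner ℝ x α : ℝ) < (r : ℝ))

/-- The root system `Φ` is irreducible. -/
def Irred : Prop :=
  ∀ Φ₁ Φ₂ : Set V, Φ₁ ∪ Φ₂ = D.Φ → (∀ a ∈ Φ₁, ∀ b ∈ Φ₂, (inner ℝ a b : ℝ) = 0) →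
    Φ₁ = ∅ ∨ Φ₂ = ∅

end RootSystemData


/-- Let `R` be a dominant region of the `k`-Catalan arrangement, `B` its
pseudomaximal alcove (the maximal alcove of the bounded region of the `(k+1)`-Catalan
arrangement corresponding to `𝓘̲`, where `𝓘 = θ(R)`), and `t ≤ k` a positive integer.
If `⟨x₀, α⟩ > t` for some `x₀ ∈ R`, then `⟨x, α⟩ > t` for all `x ∈ B`. -/
theorem statement10 {V : Type*} [NormedAddCommGroup V] [InnerProductSpace ℝ V]
    (D : RootSystemData V) (hirr : D.Irred) (k : ℕ) (R B : Set V)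
    (hR : D.IsDomRegion k R)
    (hB : D.IsMaxAlcoveOf (k + 1) (D.Ibar k (D.theta R)) B)
    (t : ℕ) (ht : 1 ≤ t) (htk : t ≤ k) (α : V) (hα : α ∈ D.pos)
    (x₀ : V) (hx₀ : x₀ ∈ R) (h : (t : ℝ) < (inner ℝ x₀ α : ℝ)) :
    ∀ x ∈ B, (t : ℝ) < (inner ℝ x α : ℝ) := by
  obtain ⟨r, hleast, hbound⟩ := hB.2 α hα
  have hr : t + 1 ≤ r := by
    by_contra hcon
    push_neg at hcon
    have hrt : r ≤ t := Nat.lt_succ_iff.mp hcon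
    obtain ⟨m, a, rr, hi, hsum, hrsum⟩ := hleast.1
    -- each rr i ≤ r ≤ t ≤ k
    have hle : ∀ i : Fin m, rr i ≤ k := by
      intro i
      have : rr i ≤ ∑ j, rr j :=
        Finset.single_le_sum (fun j _ => Nat.zero_le _) (Finset.mem_univ i)
      omega
    have hlt : ∀ i : Fin m, (inner ℝ x₀ (a i) : ℝ) < (rr i : ℝ) := by
      intro i
      have hmem : a i ∈ D.Ibar k (D.theta R) (rr i) := (hi i).2.2
      rw [RootSystemData.Ibar, if_pos (hle i)] at hmem
      exact hmem.2 x₀ hx₀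
    have hinner : (inner ℝ x₀ α : ℝ) = ∑ i, (inner ℝ x₀ (a i) : ℝ) := by
      rw [← hsum, inner_sum]
    have hsumle : ∑ i, (inner ℝ x₀ (a i) : ℝ) ≤ ∑ i, (rr i : ℝ) :=
      Finset.sum_le_sum fun i _ => (hlt i).le
    have hcast : (∑ i, (rr i : ℝ)) = (r : ℝ) := by
      rw [← hrsum]; push_cast; ring
    have : (inner ℝ x₀ α : ℝ) ≤ (r : ℝ) := by rw [hinner, ← hcast] at *; exact hsumle
    have : (r : ℝ) ≤ (t : ℝ) := by exact_mod_cast hrt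
    linarith
  intro x hx
  have hb := (hbound x hx).1
  have : (t : ℝ) ≤ (r : ℝ) - 1 := by
    have : ((t : ℝ) + 1) ≤ (r : ℝ) := by exact_mod_cast hr
    linarith
  linarith
end

section
/- If R is a bounded dominant region of the k-Catalan arrangement of an irreducible crystallographic root system Φ, then its pseudomaximal alcove equals its maximal alcove. -/
open scoped Pointwise RealInnerProductSpace

section Aux

open RootSystemData

variable {V : Type*} [NormedAddCommGroup V] [InnerProductSpace ℝ V]

private lemma closure_inner_nonneg {S : Set V} {x : V} (hx : ∀ s ∈ S, 0 ≤ (inner ℝ x s : ℝ))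
    {α : V} (hα : α ∈ AddSubmonoid.closure S) : 0 ≤ (inner ℝ x α : ℝ) := by
  refine AddSubmonoid.closure_induction (fun t ht => hx t ht) (by simp)
    (fun a b _ _ ha hb => ?_) hα
  rw [inner_add_right]; exact add_nonneg ha hb

private lemma neg_mem_Phi (D : RootSystemData V) {α : V} (hα : α ∈ D.Φ) : -α ∈ D.Φ := by
  have h := D.reflect_mem α hα α hα
  have hne : (inner ℝ α α : ℝ) ≠ 0 := by
    rw [real_inner_self_eq_norm_mul_norm]
    have := norm_pos_iff.mpr (D.ne_zero α hα)
    positivity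
  have h2 : 2 * (inner ℝ α α : ℝ) / (inner ℝ α α : ℝ) = 2 := by field_simp
  rw [h2] at h
  have h3 : α - (2 : ℝ) • α = -α := by
    rw [two_smul]; abel
  rwa [h3] at h

private lemma neg_mem_pos (D : RootSystemData V) {α : V} (hα : α ∈ D.Φ) (hnp : α ∉ D.pos) :
    -α ∈ D.pos := by
  rcases D.decomp α hα with h | h
  · exact absurd ⟨hα, h⟩ hnp
  · exact ⟨neg_mem_Phi D hα, h⟩

private lemma not_bounded (D : RootSystemData V) {k : ℕ} {R : Set V} (hR : D.IsDomRegion k R)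
    {s : V} (hs : s ∈ D.S) {x₀ : V} (hx₀ : x₀ ∈ R) (hgt : (k : ℝ) < (inner ℝ x₀ s : ℝ)) :
    ¬ Bornology.IsBounded R := by
  obtain ⟨hreg, hdom⟩ := hR
  obtain ⟨xb, hxb, hReq⟩ := hreg
  have hRsub : R ⊆ D.catComp k := hReq ▸ connectedComponentIn_subset _ _
  have hx₀c : x₀ ∈ D.catComp k := hRsub hx₀
  -- the fundamental coweight direction ω
  set U : Submodule ℝ V := Submodule.span ℝ (D.S \ {s}) with hU
  haveI : FiniteDimensional ℝ U :=
    FiniteDimensional.span_of_finite ℝ ((D.finite.subset D.S_sub).subset Set.diff_subset)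
  set p : V := (U.orthogonalProjectionOnto s : V) with hpdef
  set ω : V := s - p with hω
  have hωU : ∀ w ∈ U, (inner ℝ ω w : ℝ) = 0 := fun w hw =>
    Submodule.starProjection_inner_eq_zero s w hw
  have hpU : p ∈ U := SetLike.coe_mem _
  have hsspan : s ∉ U := by
    have h1 : (⟨s, hs⟩ : D.S) ∉ {y : D.S | (y : V) ≠ s} := by simp
    have h2 := D.S_indep.notMem_span_image h1
    intro hcon
    apply h2
    have himg : ((↑) : D.S → V) '' {y : D.S | (y : V) ≠ s} = D.S \ {s} := by
      ext v
      constructor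
      · rintro ⟨⟨y, hy⟩, hy2, rfl⟩; exact ⟨hy, hy2⟩
      · rintro ⟨hv, hv2⟩; exact ⟨⟨v, hv⟩, hv2, rfl⟩
    rw [himg]
    exact hcon
  have hωne : ω ≠ 0 := by
    intro h
    apply hsspan
    have hsp : s = p := by rwa [sub_eq_zero] at h
    rw [hsp]; exact hpU
  have hωs : 0 < (inner ℝ ω s : ℝ) := by
    have hd : s = ω + p := by rw [hω]; abel
    have e1 : (inner ℝ ω s : ℝ) = inner ℝ ω ω + inner ℝ ω p := by
      conv_lhs => rw [hd]
      rw [inner_add_right]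
    rw [e1, hωU p hpU, add_zero, real_inner_self_eq_norm_mul_norm]
    have := norm_pos_iff.mpr hωne
    positivity
  have hωS' : ∀ t ∈ D.S, t ≠ s → (inner ℝ ω t : ℝ) = 0 := fun t ht hne =>
    hωU t (Submodule.subset_span ⟨ht, hne⟩)
  have hωnn : ∀ t ∈ D.S, 0 ≤ (inner ℝ ω t : ℝ) := by
    intro t ht
    by_cases hts : t = s
    · rw [hts]; exact le_of_lt hωs
    · rw [hωS' t ht hts]
  have hωpos : ∀ α ∈ AddSubmonoid.closure D.S, 0 ≤ (inner ℝ ω α : ℝ) :=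
    fun α hα => closure_inner_nonneg hωnn hα
  have hx₀S : ∀ t ∈ D.S, 0 ≤ (inner ℝ x₀ t : ℝ) := fun t ht =>
    le_of_lt (hdom x₀ hx₀ t ⟨D.S_sub ht, AddSubmonoid.subset_closure ht⟩)
  have hx₀pos : ∀ α ∈ AddSubmonoid.closure D.S, 0 ≤ (inner ℝ x₀ α : ℝ) :=
    fun α hα => closure_inner_nonneg hx₀S hα
  have hsub : ∀ α, α ∈ AddSubmonoid.closure D.S → 0 < (inner ℝ ω α : ℝ) →
      α - s ∈ AddSubmonoid.closure D.S := by
    intro α hα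
    refine AddSubmonoid.closure_induction
      (motive := fun β _ => 0 < (inner ℝ ω β : ℝ) → β - s ∈ AddSubmonoid.closure D.S)
      (fun t ht => ?_) (fun h => ?_) (fun a b ha hb iha ihb => ?_) hα
    · intro hlt
      by_cases hts : t = s
      · rw [hts]; simpa using AddSubmonoid.zero_mem _
      · rw [hωS' t ht hts] at hlt; exact absurd hlt (lt_irrefl 0)
    · rw [inner_zero_right] at h; exact absurd h (lt_irrefl 0)
    · intro hlt
      rw [inner_add_right] at hlt
      rcases lt_or_ge 0 (inner ℝ ω a : ℝ) with h1 | h1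
      · have := iha h1
        have e : a + b - s = (a - s) + b := by abel
        rw [e]; exact AddSubmonoid.add_mem _ this hb
      · have h2 : 0 < (inner ℝ ω b : ℝ) := by
          have := hωpos a ha
          linarith
        have e : a + b - s = a + (b - s) := by abel
        rw [e]; exact AddSubmonoid.add_mem _ ha (ihb h2)
  have hkey : ∀ α ∈ D.pos, 0 < (inner ℝ ω α : ℝ) → (k : ℝ) < (inner ℝ x₀ α : ℝ) := by
    intro α hα hωα
    have h1 : α - s ∈ AddSubmonoid.closure D.S := hsub α hα.2 hωα
    have e : (inner ℝ x₀ α : ℝ) = inner ℝ x₀ s + inner ℝ x₀ (α - s) := by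
      rw [← inner_add_right, show s + (α - s) = α from by abel]
    have := hx₀pos _ h1
    linarith
  -- the ray stays in the complement of the arrangement
  have hray : ∀ t : ℝ, 0 ≤ t → x₀ + t • ω ∈ D.catComp k := by
    intro t ht α hαΦ r hrk
    have hsm : ∀ β : V, (inner ℝ (x₀ + t • ω) β : ℝ) = inner ℝ x₀ β + t * inner ℝ ω β := by
      intro β; rw [inner_add_left, real_inner_smul_left]
    by_cases hα : α ∈ D.pos
    · rcases (hωpos α hα.2).eq_or_lt with h0 | h0
      · rw [hsm, ← h0, mul_zero, add_zero]
        exact hx₀c α hαΦ r hrk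
      · have hgt2 : (r : ℝ) < (inner ℝ (x₀ + t • ω) α : ℝ) := by
          rw [hsm]
          have h1 := hkey α hα h0
          have h2 : (r : ℝ) ≤ (k : ℝ) := by exact_mod_cast hrk
          nlinarith
        exact ne_of_gt hgt2
    · have hneg := neg_mem_pos D hαΦ hα
      have h1 : 0 < (inner ℝ (x₀ + t • ω) (-α) : ℝ) := by
        rw [hsm]
        have h2 := hdom x₀ hx₀ (-α) hneg
        have h3 := hωpos _ hneg.2
        nlinarith
      rw [inner_neg_right] at h1
      have : (inner ℝ (x₀ + t • ω) α : ℝ) < 0 := by linarith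
      have hr0 : (0 : ℝ) ≤ (r : ℝ) := by positivity
      exact ne_of_lt (lt_of_lt_of_le this hr0)
  -- the ray lies in R
  have hRc : R = connectedComponentIn (D.catComp k) x₀ := by
    rw [hReq]
    exact connectedComponentIn_eq (hReq ▸ hx₀)
  have hLsub : (fun t : ℝ => x₀ + t • ω) '' Set.Ici 0 ⊆ R := by
    rw [hRc]
    refine IsPreconnected.subset_connectedComponentIn ?_ ⟨0, Set.self_mem_Ici, by simp⟩ ?_
    · exact (isPreconnected_Ici).image _ (Continuous.continuousOn (by continuity))
    · rintro _ ⟨t, ht, rfl⟩; exact hray t ht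
  intro hbdd
  obtain ⟨M, hM⟩ := isBounded_iff_forall_norm_le.mp (hbdd.subset hLsub)
  have hM0 : 0 ≤ M + ‖x₀‖ := by
    have := hM x₀ ⟨0, Set.self_mem_Ici, by simp⟩
    have := norm_nonneg x₀
    linarith
  have hωn : 0 < ‖ω‖ := norm_pos_iff.mpr hωne
  set T : ℝ := (M + ‖x₀‖ + 1) / ‖ω‖ with hT
  have hT0 : 0 ≤ T := by positivity
  have hmem := hM (x₀ + T • ω) ⟨T, hT0, rfl⟩
  have h1 : ‖T • ω‖ ≤ ‖x₀ + T • ω‖ + ‖x₀‖ := by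
    have := norm_add_le (x₀ + T • ω) (-x₀)
    simpa using this
  have h2 : ‖T • ω‖ = T * ‖ω‖ := by
    rw [norm_smul, Real.norm_of_nonneg hT0]
  have h3 : T * ‖ω‖ = M + ‖x₀‖ + 1 := by
    rw [hT]; field_simp
  linarith

private lemma mem_rVals_iff (D : RootSystemData V) (k : ℕ) (I : ℕ → Set V) (α : V) (N : ℕ) :
    N ∈ D.rVals k I α ↔ ∃ l : List (V × ℕ),
      (∀ p ∈ l, 1 ≤ p.2 ∧ p.2 ≤ k ∧ p.1 ∈ I p.2) ∧
      (l.map Prod.fst).sum = α ∧ (l.map Prod.snd).sum = N := by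
  constructor
  · rintro ⟨m, a, r, h1, h2, h3⟩
    refine ⟨List.ofFn (fun i => (a i, r i)), ?_, ?_, ?_⟩
    · intro q hq
      obtain ⟨i, rfl⟩ := List.mem_ofFn.mp hq
      exact h1 i
    · rw [List.map_ofFn, List.sum_ofFn]; exact h2
    · rw [List.map_ofFn, List.sum_ofFn]; exact h3
  · rintro ⟨l, h1, h2, h3⟩
    refine ⟨l.length, fun i => (l.get i).1, fun i => (l.get i).2,
      fun i => h1 _ (l.get_mem i), ?_, ?_⟩
    · rw [← h2]
      conv_rhs => rw [← List.ofFn_get l]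
      rw [List.map_ofFn, List.sum_ofFn]
      rfl
    · rw [← h3]
      conv_rhs => rw [← List.ofFn_get l]
      rw [List.map_ofFn, List.sum_ofFn]
      rfl

private lemma reduce (D : RootSystemData V) (k : ℕ) (I : ℕ → Set V)
    (hS : D.S ⊆ I k) (h0 : I 0 = ∅) :
    ∀ l : List (V × ℕ), (∀ q ∈ l, 1 ≤ q.2 ∧ q.2 ≤ k + 1 ∧ q.1 ∈ D.Ibar k I q.2) →
    ∃ l' : List (V × ℕ), (∀ q ∈ l', 1 ≤ q.2 ∧ q.2 ≤ k ∧ q.1 ∈ I q.2) ∧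
      (l'.map Prod.fst).sum = (l.map Prod.fst).sum ∧
      (l'.map Prod.snd).sum ≤ (l.map Prod.snd).sum := by
  intro l
  induction l with
  | nil => exact fun _ => ⟨[], by simp, by simp, by simp⟩
  | cons q t ih =>
    intro h
    obtain ⟨l', h1, h2, h3⟩ := ih (fun p hp => h p (List.mem_cons_of_mem _ hp))
    obtain ⟨hq1, hq2, hq3⟩ := h q List.mem_cons_self
    by_cases hqk : q.2 ≤ k
    · refine ⟨q :: l', ?_, ?_, ?_⟩
      · intro p hp
        rcases List.mem_cons.mp hp with rfl | hp
        · refine ⟨hq1, hqk, ?_⟩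
          rwa [RootSystemData.Ibar, if_pos hqk] at hq3
        · exact h1 p hp
      · simp only [List.map_cons, List.sum_cons, h2]
      · simp only [List.map_cons, List.sum_cons]
        exact Nat.add_le_add_left h3 _
    · rw [RootSystemData.Ibar, if_neg hqk] at hq3
      have hq2' : q.2 = k + 1 := le_antisymm hq2 (by omega)
      have hIk : ∀ (hmem : q.1 ∈ I k), _ := fun hmem => trivial
      rcases hq3 with (hq3 | hq3) | hq3
      · -- the decomposable case
        simp only [Set.mem_iUnion] at hq3
        obtain ⟨⟨i, j⟩, hij, hmem⟩ := hq3
        obtain ⟨b, hb, c, hc, hbc⟩ := Set.mem_add.mp hmem.1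
        have hi1 : 1 ≤ i := by
          rcases Nat.eq_zero_or_pos i with h | h
          · rw [h, h0] at hb; exact absurd hb (Set.notMem_empty _)
          · exact h
        have hj1 : 1 ≤ j := by
          rcases Nat.eq_zero_or_pos j with h | h
          · rw [h, h0] at hc; exact absurd hc (Set.notMem_empty _)
          · exact h
        refine ⟨(b, i) :: (c, j) :: l', ?_, ?_, ?_⟩
        · intro p hp
          rcases List.mem_cons.mp hp with rfl | hp
          · exact ⟨hi1, by omega, hb⟩
          rcases List.mem_cons.mp hp with rfl | hp
          · exact ⟨hj1, by omega, hc⟩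
          · exact h1 p hp
        · simp only [List.map_cons, List.sum_cons, h2]
          rw [← add_assoc, hbc]
        · simp only [List.map_cons, List.sum_cons]
          simp only [Prod.fst, Prod.snd] at *
          omega
      · -- q.1 ∈ I k
        have hk1 : 1 ≤ k := by
          rcases Nat.eq_zero_or_pos k with h | h
          · rw [h, h0] at hq3; exact absurd hq3 (Set.notMem_empty _)
          · exact h
        refine ⟨(q.1, k) :: l', ?_, ?_, ?_⟩
        · intro p hp
          rcases List.mem_cons.mp hp with rfl | hp
          · exact ⟨hk1, le_rfl, hq3⟩
          · exact h1 p hp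
        · simp only [List.map_cons, List.sum_cons, h2]
        · simp only [List.map_cons, List.sum_cons]
          omega
      · -- q.1 ∈ S
        have hq3' : q.1 ∈ I k := hS hq3
        have hk1 : 1 ≤ k := by
          rcases Nat.eq_zero_or_pos k with h | h
          · rw [h, h0] at hq3'; exact absurd hq3' (Set.notMem_empty _)
          · exact h
        refine ⟨(q.1, k) :: l', ?_, ?_, ?_⟩
        · intro p hp
          rcases List.mem_cons.mp hp with rfl | hp
          · exact ⟨hk1, le_rfl, hq3'⟩
          · exact h1 p hp
        · simp only [List.map_cons, List.sum_cons, h2]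
        · simp only [List.map_cons, List.sum_cons]
          omega

end Aux

/-- If `R` is a bounded dominant region of the `k`-Catalan arrangement of
an irreducible root system, then its pseudomaximal alcove equals its maximal alcove. -/
theorem statement11 {V : Type*} [NormedAddCommGroup V] [InnerProductSpace ℝ V]
    (D : RootSystemData V) (hirr : D.Irred) (k : ℕ) (R A B : Set V)
    (hR : D.IsDomRegion k R) (hbdd : Bornology.IsBounded R)
    (hA : D.IsMaxAlcoveOf k (D.theta R) A)
    (hB : D.IsMaxAlcoveOf (k + 1) (D.Ibar k (D.theta R)) B) :
    A = B := by
  classical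
  obtain ⟨⟨xb, hxb, hReq⟩, hdom⟩ := hR
  have hR' : D.IsDomRegion k R := ⟨⟨xb, hxb, hReq⟩, hdom⟩
  have hRsub : R ⊆ D.catComp k := hReq ▸ connectedComponentIn_subset _ _
  have hRne : xb ∈ R := hReq ▸ mem_connectedComponentIn hxb
  -- the zeroth ideal is empty
  have h0 : D.theta R 0 = ∅ := by
    ext α
    simp only [RootSystemData.theta, Set.mem_setOf_eq, Set.mem_empty_iff_false, iff_false,
      not_and]
    intro hpos hlt
    have h1 := hdom xb hRne α hpos
    have h2 := hlt xb hRne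
    norm_num at h2
    linarith
  -- the chain is positive
  have hS : D.S ⊆ D.theta R k := by
    intro s hs
    have hsp : s ∈ D.pos := ⟨D.S_sub hs, AddSubmonoid.subset_closure hs⟩
    refine ⟨hsp, ?_⟩
    intro x hx
    by_contra hcon
    push_neg at hcon
    have hne : (inner ℝ x s : ℝ) ≠ (k : ℝ) := hRsub hx s (D.S_sub hs) k le_rfl
    exact not_bounded D hR' hs hx (lt_of_le_of_ne hcon (Ne.symm hne)) hbdd
  -- r-values agree for the two chains
  have hsubset : ∀ α N, N ∈ D.rVals k (D.theta R) α →
      N ∈ D.rVals (k + 1) (D.Ibar k (D.theta R)) α := by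
    rintro α N ⟨m, a, r, h1, h2, h3⟩
    refine ⟨m, a, r, fun i => ⟨(h1 i).1, le_trans (h1 i).2.1 (Nat.le_succ k), ?_⟩, h2, h3⟩
    rw [RootSystemData.Ibar, if_pos (h1 i).2.1]
    exact (h1 i).2.2
  have hred : ∀ α N, N ∈ D.rVals (k + 1) (D.Ibar k (D.theta R)) α →
      ∃ N' ≤ N, N' ∈ D.rVals k (D.theta R) α := by
    intro α N hN
    obtain ⟨l, h1, h2, h3⟩ := (mem_rVals_iff D (k + 1) _ α N).mp hN
    obtain ⟨l', h1', h2', h3'⟩ := reduce D k (D.theta R) hS h0 l h1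
    exact ⟨(l'.map Prod.snd).sum, h3 ▸ h3',
      (mem_rVals_iff D k _ α _).mpr ⟨l', h1', h2'.trans h2, rfl⟩⟩
  have hleast : ∀ α r r', IsLeast (D.rVals k (D.theta R) α) r →
      IsLeast (D.rVals (k + 1) (D.Ibar k (D.theta R)) α) r' → r = r' := by
    intro α r r' h1 h2
    have hle1 : r' ≤ r := h2.2 (hsubset α r h1.1)
    obtain ⟨N', hN'le, hN'⟩ := hred α r' h2.1
    have hle2 : r ≤ N' := h1.2 hN'
    omega
  obtain ⟨⟨xA, hxA, hAeq⟩, hA2⟩ := hA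
  obtain ⟨⟨xB, hxB, hBeq⟩, hB2⟩ := hB
  -- the common convex region
  set C : Set V := {x | ∀ α ∈ D.pos, ∀ r : ℕ, IsLeast (D.rVals k (D.theta R) α) r →
    ((r : ℝ) - 1 < (inner ℝ x α : ℝ) ∧ (inner ℝ x α : ℝ) < (r : ℝ))} with hC
  have hAC : A ⊆ C := by
    intro x hx α hα r hr
    obtain ⟨r₀, hr₀, hb⟩ := hA2 α hα
    rw [hr.unique hr₀]
    exact hb x hx
  have hBC : B ⊆ C := by
    intro x hx α hα r hr
    obtain ⟨r', hr', hb⟩ := hB2 α hα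
    rw [hleast α r r' hr hr']
    exact hb x hx
  have hCaff : C ⊆ D.affComp := by
    intro x hx α hα m
    by_cases hp : α ∈ D.pos
    · obtain ⟨r, hr, _⟩ := hA2 α hp
      obtain ⟨h1, h2⟩ := hx α hp r hr
      intro hcon
      rw [hcon] at h1 h2
      have e1 : (m : ℤ) < (r : ℤ) := by exact_mod_cast h2
      have e2 : (r : ℤ) - 1 < (m : ℤ) := by
        have : ((r : ℝ) : ℝ) - 1 < (m : ℝ) := h1
        exact_mod_cast this
      omega
    · have hneg := neg_mem_pos D hα hp
      obtain ⟨r, hr, _⟩ := hA2 (-α) hneg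
      obtain ⟨h1, h2⟩ := hx (-α) hneg r hr
      rw [inner_neg_right] at h1 h2
      intro hcon
      rw [hcon] at h1 h2
      have e1 : (-m : ℤ) < (r : ℤ) := by exact_mod_cast h2
      have e2 : (r : ℤ) - 1 < (-m : ℤ) := by
        have : (r : ℝ) - 1 < ((-m : ℤ) : ℝ) := by push_cast; push_cast at h1; linarith
        exact_mod_cast this
      omega
  have hCconv : Convex ℝ C := by
    intro x hx y hy a b ha hb hab
    intro α hα r hr
    obtain ⟨hx1, hx2⟩ := hx α hα r hr
    obtain ⟨hy1, hy2⟩ := hy α hα r hr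
    have e : (inner ℝ (a • x + b • y) α : ℝ) = a * inner ℝ x α + b * inner ℝ y α := by
      rw [inner_add_left, real_inner_smul_left, real_inner_smul_left]
    rw [e]
    rcases ha.eq_or_lt with rfl | ha'
    · have hb1 : b = 1 := by linarith
      rw [hb1]
      norm_num
      exact ⟨hx1 /- unused -/ |> fun _ => hy1, hy2⟩
    · constructor
      · nlinarith [mul_lt_mul_of_pos_left hx1 ha', mul_le_mul_of_nonneg_left (le_of_lt hy1) hb]
      · nlinarith [mul_lt_mul_of_pos_left hx2 ha', mul_le_mul_of_nonneg_left (le_of_lt hy2) hb]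
  have hxAC : xA ∈ C := hAC (hAeq ▸ mem_connectedComponentIn hxA)
  have hxBC : xB ∈ C := hBC (hBeq ▸ mem_connectedComponentIn hxB)
  have hCA : C ⊆ A := by
    rw [hAeq]
    exact hCconv.isPreconnected.subset_connectedComponentIn hxAC hCaff
  have hCB : C ⊆ B := by
    rw [hBeq]
    exact hCconv.isPreconnected.subset_connectedComponentIn hxBC hCaff
  exact Set.Subset.antisymm (hAC.trans hCB) (hBC.trans hCA)
end

section
/- Every dominant region of the k-Catalan arrangement of a crystallographic root system of rank n has at most n floors and at most n ceilings. -/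
open scoped Pointwise RealInnerProductSpace

section AuxGeneral

open scoped RealInnerProductSpace

variable {V : Type*} [NormedAddCommGroup V] [InnerProductSpace ℝ V]

lemma aux_inner_self_pos {x : V} (hx : x ≠ 0) : (0:ℝ) < ⟪x, x⟫ := by
  rw [real_inner_self_eq_norm_sq]
  exact pow_pos (norm_pos_iff.mpr hx) 2

lemma aux_obtuse (s : Set V) (z : V)
    (h1 : ∀ v ∈ s, 0 < ⟪z, v⟫)
    (h2 : ∀ v ∈ s, ∀ w ∈ s, v ≠ w → ⟪v, w⟫ ≤ 0) :
    LinearIndependent ℝ ((↑) : s → V) := by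
  rw [linearIndependent_subtype_iff, linearIndepOn_iff]
  intro l hl hl0
  rw [Finsupp.mem_supported] at hl
  rw [Finsupp.linearCombination_apply, Finsupp.sum] at hl0
  classical
  set t := l.support with ht
  set P := t.filter (fun v => 0 < l v) with hP
  set N := t.filter (fun v => ¬ 0 < l v) with hN
  have hPpos : ∀ v ∈ P, 0 < l v := fun v hv => (Finset.mem_filter.mp hv).2
  have hNneg : ∀ w ∈ N, l w < 0 := by
    intro w hw
    have h1' := Finset.mem_filter.mp hw
    have h2' : l w ≠ 0 := Finsupp.mem_support_iff.mp h1'.1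
    exact lt_of_le_of_ne (not_lt.mp h1'.2) h2'
  have hmemP : ∀ v ∈ P, v ∈ s := fun v hv => hl (Finset.mem_filter.mp hv).1
  have hmemN : ∀ v ∈ N, v ∈ s := fun v hv => hl (Finset.mem_filter.mp hv).1
  have hsplit : ∑ v ∈ P, l v • v + ∑ v ∈ N, l v • v = 0 := by
    rw [Finset.sum_filter_add_sum_filter_not]
    simpa using hl0
  set u := ∑ v ∈ P, l v • v with hu
  have hu2 : u = ∑ w ∈ N, (-(l w)) • w := by
    have h : u = -∑ v ∈ N, l v • v := eq_neg_of_add_eq_zero_left hsplit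
    rw [h, ← Finset.sum_neg_distrib]
    exact Finset.sum_congr rfl (fun w _ => (neg_smul _ _).symm)
  have huu : ⟪u, u⟫ ≤ 0 := by
    nth_rewrite 1 [hu]
    nth_rewrite 1 [hu2]
    rw [sum_inner]
    apply Finset.sum_nonpos
    intro v hv
    rw [inner_sum]
    apply Finset.sum_nonpos
    intro w hw
    rw [real_inner_smul_left, real_inner_smul_right]
    have hvw : v ≠ w := by
      intro h; exact absurd (h ▸ hPpos v hv) (not_lt.mpr (hNneg w hw).le)
    have := h2 v (hmemP v hv) w (hmemN w hw) hvw
    have h3 : 0 ≤ l v * -(l w) := by nlinarith [hPpos v hv, hNneg w hw]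
    nlinarith
  have hu0 : u = 0 := real_inner_self_nonpos.mp huu
  have hz : ∀ (Q : Finset V) (g : V → ℝ), (∀ v ∈ Q, v ∈ s) → (∀ v ∈ Q, 0 < g v) →
      (∑ v ∈ Q, g v • v = 0) → Q = ∅ := by
    intro Q g hQs hQpos hQ0
    by_contra hne
    obtain ⟨v0, hv0⟩ := Finset.nonempty_of_ne_empty hne
    have hpos : (0:ℝ) < ∑ v ∈ Q, g v * ⟪z, v⟫ :=
      Finset.sum_pos (fun v hv => mul_pos (hQpos v hv) (h1 v (hQs v hv))) ⟨v0, hv0⟩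
    have : ⟪z, ∑ v ∈ Q, g v • v⟫ = ∑ v ∈ Q, g v * ⟪z, v⟫ := by
      rw [inner_sum]; simp [real_inner_smul_right]
    rw [hQ0, inner_zero_right] at this
    linarith [this ▸ hpos]
  have hPe : P = ∅ := hz P (fun v => l v) hmemP hPpos (by rw [← hu, hu0])
  have hNe : N = ∅ := hz N (fun v => -(l v)) hmemN
    (fun w hw => by simpa using neg_pos.mpr (hNneg w hw))
    (by rw [← hu2, hu0])
  have hte : t = ∅ := by
    apply Finset.eq_empty_iff_forall_notMem.mpr
    intro v hv
    by_cases h : 0 < l v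
    · have hvP : v ∈ P := Finset.mem_filter.mpr ⟨hv, h⟩
      rw [hPe] at hvP; simp at hvP
    · have hvN : v ∈ N := Finset.mem_filter.mpr ⟨hv, h⟩
      rw [hNe] at hvN; simp at hvN
  exact Finsupp.support_eq_empty.mp hte

lemma aux_closure_ge {R : Set V} (v : V) (c : ℝ) (h : ∀ x ∈ R, c < ⟪x, v⟫) :
    ∀ y ∈ closure R, c ≤ ⟪y, v⟫ := by
  intro y hy
  have hcl : closure R ⊆ {x : V | c ≤ ⟪x, v⟫} :=
    closure_minimal (fun x hx => (h x hx).le)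
      (isClosed_le continuous_const (Continuous.inner continuous_id continuous_const))
  exact hcl hy

lemma aux_closure_le {R : Set V} (v : V) (c : ℝ) (h : ∀ x ∈ R, ⟪x, v⟫ < c) :
    ∀ y ∈ closure R, ⟪y, v⟫ ≤ c := by
  intro y hy
  have hcl : closure R ⊆ {x : V | ⟪x, v⟫ ≤ c} :=
    closure_minimal (fun x hx => (h x hx).le)
      (isClosed_le (Continuous.inner continuous_id continuous_const) continuous_const)
  exact hcl hy

lemma aux_wall_gen {R : Set V} {α : V} {r : ℝ}
    (hw : ∃ x, ⟪x, α⟫ = r ∧ ∃ ε > 0, ∀ y, ⟪y, α⟫ = r → dist y x < ε → y ∈ closure R)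
    (hα : α ≠ 0) {β : V} (hβ : ∀ c : ℝ, β ≠ c • α) (s₁ s₂ : ℝ) :
    ∃ y ∈ closure R, ⟪y, α⟫ = r ∧ ⟪y, β⟫ ≠ s₁ ∧ ⟪y, β⟫ ≠ s₂ := by
  obtain ⟨x, hx, ε, hε, hball⟩ := hw
  have hαα : (0:ℝ) < ⟪α, α⟫ := aux_inner_self_pos hα
  set p : ℝ := ⟪β, α⟫ / ⟪α, α⟫ with hp
  set d : V := β - p • α with hd
  have hdne : d ≠ 0 := fun h0 => hβ p (sub_eq_zero.mp h0)
  have hdα : ⟪d, α⟫ = 0 := by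
    rw [hd, inner_sub_left, real_inner_smul_left, hp]
    field_simp
    ring
  have hβeq : β = d + p • α := by rw [hd]; abel
  have hdβ : ⟪d, β⟫ = ⟪d, d⟫ := by
    rw [hβeq, inner_add_right, real_inner_smul_right, hdα]; ring
  have hc : (0:ℝ) < ⟪d, d⟫ := aux_inner_self_pos hdne
  have hdn : (0:ℝ) < ‖d‖ := norm_pos_iff.mpr hdne
  set δ : ℝ := ε / (2 * ‖d‖) with hδdef
  have hδ : 0 < δ := div_pos hε (by positivity)
  set c : ℝ := ⟪d, d⟫ with hcdef
  set b₁ : ℝ := (s₁ - ⟪x, β⟫) / c with hb₁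
  set b₂ : ℝ := (s₂ - ⟪x, β⟫) / c with hb₂
  have hchoose : ∃ u : ℝ, 0 < u ∧ u ≤ δ ∧ u ≠ b₁ ∧ u ≠ b₂ := by
    by_contra hcon
    push_neg at hcon
    have e1 := hcon δ hδ le_rfl
    have e2 := hcon (δ/2) (by linarith) (by linarith)
    have e3 := hcon (δ/3) (by linarith) (by linarith)
    have e1' : δ = b₁ ∨ δ = b₂ := by tauto
    have e2' : δ/2 = b₁ ∨ δ/2 = b₂ := by tauto
    have e3' : δ/3 = b₁ ∨ δ/3 = b₂ := by tauto
    rcases e1' with e1'|e1' <;> rcases e2' with e2'|e2' <;> rcases e3' with e3'|e3' <;> linarith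
  obtain ⟨u, hu0, huδ, hub₁, hub₂⟩ := hchoose
  set y : V := x + u • d with hy
  have hyα : ⟪y, α⟫ = r := by
    rw [hy, inner_add_left, real_inner_smul_left, hdα, hx]; ring
  have hyβ : ⟪y, β⟫ = ⟪x, β⟫ + u * c := by
    rw [hy, inner_add_left, real_inner_smul_left, hdβ]
  have hdist : dist y x < ε := by
    rw [hy, dist_eq_norm, add_sub_cancel_left, norm_smul, Real.norm_eq_abs,
      abs_of_pos hu0]
    calc u * ‖d‖ ≤ δ * ‖d‖ := by nlinarith
    _ = ε / 2 := by rw [hδdef]; field_simp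
    _ < ε := by linarith
  refine ⟨y, hball y hyα hdist, hyα, ?_, ?_⟩
  · rw [hyβ]; intro hcon
    exact hub₁ (by rw [hb₁]; field_simp; linarith)
  · rw [hyβ]; intro hcon
    exact hub₂ (by rw [hb₂]; field_simp; linarith)

lemma aux_interval_gen (k : ℕ) {R : Set V} (hconn : IsPreconnected R)
    {x0 : V} (hx0 : x0 ∈ R) {γ : V}
    (havoid : ∀ x ∈ R, ∀ j : ℕ, j ≤ k → ⟪x, γ⟫ ≠ (j : ℝ))
    (hpos : ∀ x ∈ R, 0 < ⟪x, γ⟫) :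
    ∃ t : ℕ, t ≤ k ∧ (∀ x ∈ R, (t : ℝ) < ⟪x, γ⟫) ∧
      (t < k → ∀ x ∈ R, ⟪x, γ⟫ < (t : ℝ) + 1) := by
  have hfc : Continuous (fun x : V => ⟪x, γ⟫) :=
    Continuous.inner continuous_id continuous_const
  have hoc : Set.OrdConnected ((fun x : V => ⟪x, γ⟫) '' R) :=
    (hconn.image _ hfc.continuousOn).ordConnected
  have hiv : ∀ a ∈ R, ∀ b ∈ R, ∀ j : ℕ, j ≤ k → ¬(⟪a, γ⟫ ≤ (j:ℝ) ∧ (j:ℝ) ≤ ⟪b, γ⟫) := by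
    rintro a ha b hb j hj ⟨hj1, hj2⟩
    have hmem : (j:ℝ) ∈ Set.Icc (⟪a, γ⟫) (⟪b, γ⟫) := ⟨hj1, hj2⟩
    have := hoc.out (Set.mem_image_of_mem _ ha) (Set.mem_image_of_mem _ hb) hmem
    obtain ⟨c, hc, hceq⟩ := this
    exact havoid c hc j hj hceq
  set f0 := ⟪x0, γ⟫ with hf0
  refine ⟨min k ⌊f0⌋₊, min_le_left _ _, ?_, ?_⟩
  · intro x hx
    by_contra hle
    push_neg at hle
    have h1 : ((min k ⌊f0⌋₊ : ℕ) : ℝ) ≤ f0 := by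
      calc ((min k ⌊f0⌋₊ : ℕ) : ℝ) ≤ (⌊f0⌋₊ : ℝ) := by exact_mod_cast min_le_right k _
      _ ≤ f0 := Nat.floor_le (hpos x0 hx0).le
    exact hiv x hx x0 hx0 _ (min_le_left _ _) ⟨hle, h1⟩
  · intro htk x hx
    have hmin : min k ⌊f0⌋₊ = ⌊f0⌋₊ := by omega
    by_contra hge
    push_neg at hge
    have hf0lt : f0 < (⌊f0⌋₊ : ℝ) + 1 := Nat.lt_floor_add_one f0
    apply hiv x0 hx0 x hx (⌊f0⌋₊ + 1) (by omega)
    constructor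
    · push_cast; linarith
    · rw [hmin] at hge; push_cast; linarith

end AuxGeneral


section AuxRoot

open scoped RealInnerProductSpace

variable {V : Type*} [NormedAddCommGroup V] [InnerProductSpace ℝ V] (D : RootSystemData V)

lemma aux_neg_mem {γ : V} (hγ : γ ∈ D.Φ) : -γ ∈ D.Φ := by
  have h := D.reflect_mem γ hγ γ hγ
  have hγγ : (⟪γ, γ⟫ : ℝ) ≠ 0 := ne_of_gt (aux_inner_self_pos (D.ne_zero γ hγ))
  have h2 : 2 * (⟪γ, γ⟫ : ℝ) / ⟪γ, γ⟫ = (2:ℝ) := by field_simp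
  rw [h2] at h
  have e : γ - (2:ℝ) • γ = -γ := by
    rw [two_smul]; abel
  rwa [e] at h

lemma aux_pos_or_neg {γ : V} (hγ : γ ∈ D.Φ) : γ ∈ D.pos ∨ -γ ∈ D.pos :=
  (D.decomp γ hγ).imp (fun h => ⟨hγ, h⟩) (fun h => ⟨aux_neg_mem D hγ, h⟩)

lemma aux_pos_ne_smul {α β : V} (hα : α ∈ D.pos) (hβ : β ∈ D.pos) (hne : α ≠ β)
    {z : V} (hzα : 0 < ⟪z, α⟫) (hzβ : 0 < ⟪z, β⟫) : ∀ c : ℝ, β ≠ c • α := by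
  intro c hc
  rcases D.reduced α hα.1 c (by rw [← hc]; exact hβ.1) with h1 | h1
  · rw [h1, one_smul] at hc
    exact hne hc.symm
  · rw [h1, neg_one_smul] at hc
    rw [hc, inner_neg_right] at hzβ
    linarith

lemma aux_sub_mem {α β : V} (hα : α ∈ D.Φ) (hβ : β ∈ D.Φ)
    (hip : 0 < (⟪α, β⟫ : ℝ)) (hns : ∀ c : ℝ, β ≠ c • α) : α - β ∈ D.Φ := by
  obtain ⟨m, hm⟩ := D.crystal α hα β hβ
  obtain ⟨m', hm'⟩ := D.crystal β hβ α hα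
  have hαα : (0:ℝ) < ⟪α, α⟫ := aux_inner_self_pos (D.ne_zero α hα)
  have hββ : (0:ℝ) < ⟪β, β⟫ := aux_inner_self_pos (D.ne_zero β hβ)
  have hsymm : (⟪α, β⟫ : ℝ) = ⟪β, α⟫ := real_inner_comm β α
  have hβα : (0:ℝ) < ⟪β, α⟫ := by rw [← hsymm]; exact hip
  have hm0 : (0:ℝ) < (m : ℝ) := by
    rw [← hm]; positivity
  have hm'0 : (0:ℝ) < (m' : ℝ) := by
    rw [← hm']; positivity
  have e1 : 2 * (⟪β, α⟫ : ℝ) = (m : ℝ) * ⟪α, α⟫ := by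
    field_simp at hm; linarith [hm]
  have e2 : 2 * (⟪α, β⟫ : ℝ) = (m' : ℝ) * ⟪β, β⟫ := by
    field_simp at hm'; linarith [hm']
  set p : ℝ := ⟪β, α⟫ / ⟪α, α⟫ with hp
  have hdne : β - p • α ≠ 0 := fun h0 => hns p (sub_eq_zero.mp h0)
  have hdd : (0:ℝ) < ⟪β - p • α, β - p • α⟫ := aux_inner_self_pos hdne
  have hcs : (⟪β, α⟫ : ℝ)^2 < ⟪α, α⟫ * ⟪β, β⟫ := by
    have hexp : (⟪β - p • α, β - p • α⟫ : ℝ)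
        = ⟪β, β⟫ - 2 * p * ⟪β, α⟫ + p^2 * ⟪α, α⟫ := by
      simp only [inner_sub_left, inner_sub_right, real_inner_smul_left, real_inner_smul_right]
      rw [real_inner_comm β α]
      ring
    rw [hexp, hp] at hdd
    have h := mul_pos hdd hαα
    field_simp at h
    nlinarith [h, hαα, hββ]
  have hprod : (m : ℝ) * (m' : ℝ) < 4 := by
    have hab : (0:ℝ) < ⟪α, α⟫ * ⟪β, β⟫ := mul_pos hαα hββ
    nlinarith [e1, e2, hcs, hab, hsymm]
  have hm1 : 1 ≤ m := by
    have : (0:ℤ) < m := by exact_mod_cast hm0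
    omega
  have hm'1 : 1 ≤ m' := by
    have : (0:ℤ) < m' := by exact_mod_cast hm'0
    omega
  have hcase : m = 1 ∨ m' = 1 := by
    by_contra h
    push_neg at h
    have h1 : 2 ≤ m := by omega
    have h2 : 2 ≤ m' := by omega
    have : (4:ℝ) ≤ (m:ℝ) * (m':ℝ) := by
      have : (4:ℤ) ≤ m * m' := by nlinarith
      exact_mod_cast this
    linarith
  rcases hcase with h | h
  · have hr := D.reflect_mem α hα β hβ
    rw [hm, h] at hr
    push_cast at hr
    rw [one_smul] at hr
    have := aux_neg_mem D hr
    rwa [neg_sub] at this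
  · have hr := D.reflect_mem β hβ α hα
    rw [hm', h] at hr
    push_cast at hr
    rwa [one_smul] at hr

lemma aux_wall_pt {R : Set V} {α : V} {r : ℝ} (hw : D.IsWall R α r) :
    ∃ y ∈ closure R, (⟪y, α⟫ : ℝ) = r := by
  obtain ⟨x, hx, ε, hε, hball⟩ := hw
  exact ⟨x, hball x hx (by simpa using hε), hx⟩

lemma aux_floor_unique {R : Set V} {α : V} {r s : ℝ}
    (hf : D.IsFloor R α r) (hg : D.IsFloor R α s) : r = s := by
  obtain ⟨y, hy, hyα⟩ := aux_wall_pt D hg.1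
  obtain ⟨z, hz, hzα⟩ := aux_wall_pt D hf.1
  have h1 : r ≤ s := hyα ▸ aux_closure_ge α r hf.2.2 y hy
  have h2 : s ≤ r := hzα ▸ aux_closure_ge α s hg.2.2 z hz
  linarith

lemma aux_ceiling_unique {R : Set V} {α : V} {r s : ℝ}
    (hf : D.IsCeiling R α r) (hg : D.IsCeiling R α s) : r = s := by
  obtain ⟨y, hy, hyα⟩ := aux_wall_pt D hg.1
  obtain ⟨z, hz, hzα⟩ := aux_wall_pt D hf.1
  have h1 : s ≤ r := hyα ▸ aux_closure_le α r hf.2.2 y hy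
  have h2 : r ≤ s := hzα ▸ aux_closure_le α s hg.2.2 z hz
  linarith

end AuxRoot


section AuxMain

open scoped RealInnerProductSpace

variable {V : Type*} [NormedAddCommGroup V] [InnerProductSpace ℝ V] (D : RootSystemData V)

lemma aux_floor_main (k : ℕ) {R : Set V} (hconn : IsPreconnected R)
    (hsub : R ⊆ D.catComp k) {x0 : V} (hx0 : x0 ∈ R)
    (hdom : ∀ x ∈ R, ∀ δ ∈ D.pos, 0 < ⟪x, δ⟫)
    {α β : V} {r s : ℕ} (hα : α ∈ D.pos) (hβ : β ∈ D.pos)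
    (hr1 : 1 ≤ r) (hrk : r ≤ k) (hs1 : 1 ≤ s) (hsk : s ≤ k)
    (hfα : D.IsFloor R α (r:ℝ)) (hfβ : D.IsFloor R β (s:ℝ))
    (hγ : α - β ∈ D.pos) : False := by
  have hne0 : α - β ≠ 0 := D.ne_zero _ hγ.1
  have hne : α ≠ β := fun h => hne0 (by rw [h]; simp)
  have hαβns : ∀ c : ℝ, β ≠ c • α :=
    aux_pos_ne_smul D hα hβ hne (hdom x0 hx0 α hα) (hdom x0 hx0 β hβ)
  have hγβns : ∀ c : ℝ, α - β ≠ c • β := by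
    intro c hc
    have hsum : α = (c+1) • β := by
      have h := sub_eq_iff_eq_add.mp hc
      rw [h, add_smul, one_smul]
    rcases D.reduced β hβ.1 (c+1) (by rw [← hsum]; exact hα.1) with h1 | h1
    · rw [h1, one_smul] at hsum; exact hne hsum
    · rw [h1, neg_one_smul] at hsum
      have h2 := hdom x0 hx0 α hα
      rw [hsum, inner_neg_right] at h2
      linarith [hdom x0 hx0 β hβ]
  obtain ⟨t, htk, htlow, htup⟩ := aux_interval_gen k hconn hx0
    (fun x hx j hj => hsub hx (α-β) hγ.1 j hj) (fun x hx => hdom x hx _ hγ)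
  obtain ⟨y, hyc, hyα, hys, hyrt⟩ :=
    aux_wall_gen hfα.1 (D.ne_zero α hα.1) hαβns (s:ℝ) ((r:ℝ) - t)
  have hyβge : (s:ℝ) ≤ ⟪y, β⟫ := aux_closure_ge β (s:ℝ) hfβ.2.2 y hyc
  have hyβ : (s:ℝ) < ⟪y, β⟫ := lt_of_le_of_ne hyβge (Ne.symm hys)
  have hyγeq : ⟪y, α - β⟫ = (r:ℝ) - ⟪y, β⟫ := by
    rw [inner_sub_right, hyα]
  have hyγge : (t:ℝ) ≤ ⟪y, α - β⟫ := aux_closure_ge _ _ htlow y hyc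
  have hyγ : (t:ℝ) < ⟪y, α - β⟫ := by
    apply lt_of_le_of_ne hyγge
    intro h
    apply hyrt
    rw [hyγeq] at h
    linarith
  have hA : (s:ℝ) + t < (r:ℝ) := by
    rw [hyγeq] at hyγ; linarith
  have hAn : s + t < r := by exact_mod_cast hA
  rcases lt_or_eq_of_le htk with htk' | htk'
  · obtain ⟨z, hzc, hzβ, hzt, _⟩ :=
      aux_wall_gen hfβ.1 (D.ne_zero β hβ.1) hγβns ((t:ℝ)+1) ((t:ℝ)+1)
    have hzγle : ⟪z, α - β⟫ ≤ (t:ℝ)+1 := aux_closure_le _ _ (htup htk') z hzc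
    have hzγ : ⟪z, α - β⟫ < (t:ℝ)+1 := lt_of_le_of_ne hzγle hzt
    have hzαge : (r:ℝ) ≤ ⟪z, α⟫ := aux_closure_ge α (r:ℝ) hfα.2.2 z hzc
    have hzeq : ⟪z, α⟫ = ⟪z, β⟫ + ⟪z, α - β⟫ := by
      rw [inner_sub_right]; ring
    have hB : (r:ℝ) < (s:ℝ) + t + 1 := by
      rw [hzeq, hzβ] at hzαge; linarith
    have hBn : r < s + t + 1 := by exact_mod_cast hB
    omega
  · omega

lemma aux_ceiling_main (k : ℕ) {R : Set V} (hconn : IsPreconnected R)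
    (hsub : R ⊆ D.catComp k) {x0 : V} (hx0 : x0 ∈ R)
    (hdom : ∀ x ∈ R, ∀ δ ∈ D.pos, 0 < ⟪x, δ⟫)
    {α β : V} {r s : ℕ} (hα : α ∈ D.pos) (hβ : β ∈ D.pos)
    (hr1 : 1 ≤ r) (hrk : r ≤ k) (hs1 : 1 ≤ s) (hsk : s ≤ k)
    (hfα : D.IsCeiling R α (r:ℝ)) (hfβ : D.IsCeiling R β (s:ℝ))
    (hγ : α - β ∈ D.pos) : False := by
  have hne0 : α - β ≠ 0 := D.ne_zero _ hγ.1
  have hne : α ≠ β := fun h => hne0 (by rw [h]; simp)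
  have hαβns : ∀ c : ℝ, β ≠ c • α :=
    aux_pos_ne_smul D hα hβ hne (hdom x0 hx0 α hα) (hdom x0 hx0 β hβ)
  have hγβns : ∀ c : ℝ, α - β ≠ c • β := by
    intro c hc
    have hsum : α = (c+1) • β := by
      have h := sub_eq_iff_eq_add.mp hc
      rw [h, add_smul, one_smul]
    rcases D.reduced β hβ.1 (c+1) (by rw [← hsum]; exact hα.1) with h1 | h1
    · rw [h1, one_smul] at hsum; exact hne hsum
    · rw [h1, neg_one_smul] at hsum
      have h2 := hdom x0 hx0 α hα
      rw [hsum, inner_neg_right] at h2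
      linarith [hdom x0 hx0 β hβ]
  obtain ⟨t, htk, htlow, htup⟩ := aux_interval_gen k hconn hx0
    (fun x hx j hj => hsub hx (α-β) hγ.1 j hj) (fun x hx => hdom x hx _ hγ)
  rcases lt_or_eq_of_le htk with htk' | htk'
  · obtain ⟨y, hyc, hyα, hys, hyrt⟩ :=
      aux_wall_gen hfα.1 (D.ne_zero α hα.1) hαβns (s:ℝ) ((r:ℝ) - ((t:ℝ)+1))
    have hyβle : ⟪y, β⟫ ≤ (s:ℝ) := aux_closure_le β (s:ℝ) hfβ.2.2 y hyc
    have hyβ : ⟪y, β⟫ < (s:ℝ) := lt_of_le_of_ne hyβle hys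
    have hyγeq : ⟪y, α - β⟫ = (r:ℝ) - ⟪y, β⟫ := by
      rw [inner_sub_right, hyα]
    have hyγle : ⟪y, α - β⟫ ≤ (t:ℝ)+1 := aux_closure_le _ _ (htup htk') y hyc
    have hyγ : ⟪y, α - β⟫ < (t:ℝ)+1 := by
      apply lt_of_le_of_ne hyγle
      intro h
      apply hyrt
      rw [hyγeq] at h
      linarith
    have hB : (r:ℝ) < (s:ℝ) + t + 1 := by
      rw [hyγeq] at hyγ; linarith
    have hBn : r < s + t + 1 := by exact_mod_cast hB
    obtain ⟨z, hzc, hzβ, hzt, _⟩ :=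
      aux_wall_gen hfβ.1 (D.ne_zero β hβ.1) hγβns (t:ℝ) (t:ℝ)
    have hzγge : (t:ℝ) ≤ ⟪z, α - β⟫ := aux_closure_ge _ _ htlow z hzc
    have hzγ : (t:ℝ) < ⟪z, α - β⟫ := lt_of_le_of_ne hzγge (Ne.symm hzt)
    have hzαle : ⟪z, α⟫ ≤ (r:ℝ) := aux_closure_le α (r:ℝ) hfα.2.2 z hzc
    have hzeq : ⟪z, α⟫ = ⟪z, β⟫ + ⟪z, α - β⟫ := by
      rw [inner_sub_right]; ring
    have hA : (s:ℝ) + t < (r:ℝ) := by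
      rw [hzeq, hzβ] at hzαle; linarith
    have hAn : s + t < r := by exact_mod_cast hA
    omega
  · have h1 := htlow x0 hx0
    have h2 := hdom x0 hx0 β hβ
    have h3 := hfα.2.2 x0 hx0
    have h4 : ⟪x0, α⟫ = ⟪x0, β⟫ + ⟪x0, α - β⟫ := by
      rw [inner_sub_right]; ring
    have h5 : ((r:ℝ)) ≤ (k:ℝ) := by exact_mod_cast hrk
    rw [htk'] at h1
    rw [h4] at h3
    linarith

lemma aux_floor_pairwise (k : ℕ) {R : Set V} (hconn : IsPreconnected R)
    (hsub : R ⊆ D.catComp k) {x0 : V} (hx0 : x0 ∈ R)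
    (hdom : ∀ x ∈ R, ∀ δ ∈ D.pos, 0 < ⟪x, δ⟫)
    {α β : V} {r s : ℕ} (hα : α ∈ D.pos) (hβ : β ∈ D.pos)
    (hr1 : 1 ≤ r) (hrk : r ≤ k) (hs1 : 1 ≤ s) (hsk : s ≤ k)
    (hfα : D.IsFloor R α (r:ℝ)) (hfβ : D.IsFloor R β (s:ℝ))
    (hne : α ≠ β) : (⟪α, β⟫ : ℝ) ≤ 0 := by
  by_contra hip
  push_neg at hip
  have hns : ∀ c : ℝ, β ≠ c • α :=
    aux_pos_ne_smul D hα hβ hne (hdom x0 hx0 α hα) (hdom x0 hx0 β hβ)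
  have hsubΦ : α - β ∈ D.Φ := aux_sub_mem D hα.1 hβ.1 hip hns
  rcases aux_pos_or_neg D hsubΦ with h | h
  · exact aux_floor_main D k hconn hsub hx0 hdom hα hβ hr1 hrk hs1 hsk hfα hfβ h
  · rw [neg_sub] at h
    exact aux_floor_main D k hconn hsub hx0 hdom hβ hα hs1 hsk hr1 hrk hfβ hfα h

lemma aux_ceiling_pairwise (k : ℕ) {R : Set V} (hconn : IsPreconnected R)
    (hsub : R ⊆ D.catComp k) {x0 : V} (hx0 : x0 ∈ R)
    (hdom : ∀ x ∈ R, ∀ δ ∈ D.pos, 0 < ⟪x, δ⟫)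
    {α β : V} {r s : ℕ} (hα : α ∈ D.pos) (hβ : β ∈ D.pos)
    (hr1 : 1 ≤ r) (hrk : r ≤ k) (hs1 : 1 ≤ s) (hsk : s ≤ k)
    (hfα : D.IsCeiling R α (r:ℝ)) (hfβ : D.IsCeiling R β (s:ℝ))
    (hne : α ≠ β) : (⟪α, β⟫ : ℝ) ≤ 0 := by
  by_contra hip
  push_neg at hip
  have hns : ∀ c : ℝ, β ≠ c • α :=
    aux_pos_ne_smul D hα hβ hne (hdom x0 hx0 α hα) (hdom x0 hx0 β hβ)
  have hsubΦ : α - β ∈ D.Φ := aux_sub_mem D hα.1 hβ.1 hip hns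
  rcases aux_pos_or_neg D hsubΦ with h | h
  · exact aux_ceiling_main D k hconn hsub hx0 hdom hα hβ hr1 hrk hs1 hsk hfα hfβ h
  · rw [neg_sub] at h
    exact aux_ceiling_main D k hconn hsub hx0 hdom hβ hα hs1 hsk hr1 hrk hfβ hfα h

lemma aux_count {n : ℕ} (hrank : D.S.ncard = n)
    (P : Set (V × ℕ)) (hsub : ∀ p ∈ P, p.1 ∈ D.pos)
    (hinj : ∀ p ∈ P, ∀ q ∈ P, p.1 = q.1 → p = q)
    (z : V) (hz : ∀ δ ∈ D.pos, 0 < ⟪z, δ⟫)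
    (hobt : ∀ p ∈ P, ∀ q ∈ P, p.1 ≠ q.1 → (⟪p.1, q.1⟫ : ℝ) ≤ 0) :
    P.ncard ≤ n := by
  classical
  set A := Prod.fst '' P with hA
  have hAsub : A ⊆ D.Φ := by
    rintro _ ⟨p, hp, rfl⟩; exact (hsub p hp).1
  have hAfin : A.Finite := D.finite.subset hAsub
  have hinj' : Set.InjOn Prod.fst P := fun p hp q hq h => hinj p hp q hq h
  have hPfin : P.Finite := Set.Finite.of_finite_image hAfin hinj'
  have hcard : P.ncard = A.ncard := (Set.ncard_image_of_injOn hinj').symm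
  have hind : LinearIndependent ℝ ((↑) : A → V) := by
    apply aux_obtuse A z
    · rintro _ ⟨p, hp, rfl⟩; exact hz _ (hsub p hp)
    · rintro _ ⟨p, hp, rfl⟩ _ ⟨q, hq, rfl⟩ hnev
      exact hobt p hp q hq hnev
  have hSfin : D.S.Finite := D.finite.subset D.S_sub
  have hSspan : A ⊆ (Submodule.span ℝ D.S : Set V) := by
    rintro _ ⟨p, hp, rfl⟩
    have h2 : AddSubmonoid.closure D.S ≤ (Submodule.span ℝ D.S).toAddSubmonoid :=
      AddSubmonoid.closure_le.mpr (fun x hx => Submodule.subset_span hx)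
    exact h2 (hsub p hp).2
  haveI : Module.Finite ℝ (Submodule.span ℝ D.S) := Module.Finite.span_of_finite ℝ hSfin
  haveI : Fintype A := hAfin.fintype
  haveI : Fintype D.S := hSfin.fintype
  have h1 : Module.finrank ℝ (Submodule.span ℝ A) = A.toFinset.card :=
    finrank_span_set_eq_card hind
  have h2 : Submodule.span ℝ A ≤ Submodule.span ℝ D.S := Submodule.span_le.mpr hSspan
  have h3 : Module.finrank ℝ (Submodule.span ℝ A) ≤ Module.finrank ℝ (Submodule.span ℝ D.S) :=
    Submodule.finrank_mono h2
  have h4 : Module.finrank ℝ (Submodule.span ℝ D.S) = D.S.toFinset.card :=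
    finrank_span_set_eq_card D.S_indep
  have h5 : A.ncard = A.toFinset.card := Set.ncard_eq_toFinset_card' A
  have h6 : D.S.ncard = D.S.toFinset.card := Set.ncard_eq_toFinset_card' D.S
  omega

end AuxMain


/-- Every dominant region of the `k`-Catalan arrangement of a root system
of rank `n` has at most `n` floors and at most `n` ceilings. -/
theorem statement12 {V : Type*} [NormedAddCommGroup V] [InnerProductSpace ℝ V]
    (D : RootSystemData V) (n : ℕ) (hrank : D.S.ncard = n)
    (k : ℕ) (R : Set V) (hR : D.IsDomRegion k R) :
    {p : V × ℕ | p.1 ∈ D.pos ∧ 1 ≤ p.2 ∧ p.2 ≤ k ∧ D.IsFloor R p.1 (p.2 : ℝ)}.ncard ≤ n ∧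
    {p : V × ℕ | p.1 ∈ D.pos ∧ 1 ≤ p.2 ∧ p.2 ≤ k ∧ D.IsCeiling R p.1 (p.2 : ℝ)}.ncard ≤ n := by
  obtain ⟨hreg, hdom⟩ := hR
  obtain ⟨x0, hx0c, hReq⟩ := hreg
  have hx0 : x0 ∈ R := hReq ▸ mem_connectedComponentIn hx0c
  have hconn : IsPreconnected R := hReq ▸ isPreconnected_connectedComponentIn
  have hsub : R ⊆ D.catComp k := hReq ▸ connectedComponentIn_subset _ _
  constructor
  · apply aux_count D hrank _ (fun p hp => hp.1) ?_ x0 (fun δ hδ => hdom x0 hx0 δ hδ) ?_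
    · rintro p ⟨hp1, hp2, hp3, hp4⟩ q ⟨hq1, hq2, hq3, hq4⟩ hpq
      have := aux_floor_unique D hp4 (hpq ▸ hq4)
      have : p.2 = q.2 := by exact_mod_cast this
      exact Prod.ext hpq this
    · rintro p ⟨hp1, hp2, hp3, hp4⟩ q ⟨hq1, hq2, hq3, hq4⟩ hpq
      exact aux_floor_pairwise D k hconn hsub hx0 hdom hp1 hq1 hp2 hp3 hq2 hq3 hp4 hq4 hpq
  · apply aux_count D hrank _ (fun p hp => hp.1) ?_ x0 (fun δ hδ => hdom x0 hx0 δ hδ) ?_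
    · rintro p ⟨hp1, hp2, hp3, hp4⟩ q ⟨hq1, hq2, hq3, hq4⟩ hpq
      have := aux_ceiling_unique D hp4 (hpq ▸ hq4)
      have : p.2 = q.2 := by exact_mod_cast this
      exact Prod.ext hpq this
    · rintro p ⟨hp1, hp2, hp3, hp4⟩ q ⟨hq1, hq2, hq3, hq4⟩ hpq
      exact aux_ceiling_pairwise D k hconn hsub hx0 hdom hp1 hq1 hp2 hp3 hq2 hq3 hp4 hq4 hpq
end
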